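/- For every integer n ≥ 1 and every α ∈ [0, π], one has sin(α) ≤ S_n(α) ≤ α, where S_n(α) := (n · ∫₀^α sin^{n-1}(s) ds)^{1/n}. -/

import Mathlib

open Real

noncomputable def Sn (n : ℕ) (d : ℝ) : ℝ :=
  ((n : ℝ) * ∫ s in (0:ℝ)..d, Real.sin s ^ (n - 1)) ^ ((1 : ℝ) / n)

theorem stmt_0 (n : ℕ) (hn : 1 ≤ n) (α : ℝ) (hα : α ∈ Set.Icc 0 Real.pi) :
    Real.sin α ≤ Sn n α ∧ Sn n α ≤ α := by
  obtain ⟨h0, hπ⟩ := hα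
  have hn0 : (n : ℝ) ≠ 0 := Nat.cast_ne_zero.mpr (by omega)
  have hnpos : (0 : ℝ) < n := by positivity
  have hsin_nonneg : ∀ s ∈ Set.Icc (0:ℝ) α, 0 ≤ Real.sin s := fun s hs =>
    Real.sin_nonneg_of_nonneg_of_le_pi hs.1 (hs.2.trans hπ)
  -- integrability
  have hc1 : Continuous fun s : ℝ => Real.sin s ^ (n - 1) :=
    (Real.continuous_sin.pow _)
  have hc2 : Continuous fun s : ℝ => s ^ (n - 1) := continuous_pow _
  have hc3 : Continuous fun s : ℝ => Real.sin s ^ (n - 1) * Real.cos s :=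
    hc1.mul Real.continuous_cos
  -- the key FTC identity: sin α ^ n = n * ∫ sin^{n-1} * cos
  have hftc : Real.sin α ^ n = (n : ℝ) * ∫ s in (0:ℝ)..α, Real.sin s ^ (n - 1) * Real.cos s := by
    have hd : ∀ x ∈ Set.uIcc (0:ℝ) α, HasDerivAt (fun y => Real.sin y ^ n)
        ((n : ℝ) * (Real.sin x ^ (n - 1) * Real.cos x)) x := by
      intro x _
      have := (Real.hasDerivAt_sin x).fun_pow n
      exact this.congr_deriv (by ring)
    have := intervalIntegral.integral_eq_sub_of_hasDerivAt hd
      (((continuous_const.mul hc3).intervalIntegrable _ _))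
    rw [intervalIntegral.integral_const_mul] at this
    rw [this, Real.sin_zero, zero_pow (by omega), sub_zero]
  -- integral nonneg
  have hI_nonneg : 0 ≤ ∫ s in (0:ℝ)..α, Real.sin s ^ (n - 1) :=
    intervalIntegral.integral_nonneg h0 (fun s hs => pow_nonneg (hsin_nonneg s hs) _)
  constructor
  · -- lower bound
    have hle : Real.sin α ^ n ≤ (n : ℝ) * ∫ s in (0:ℝ)..α, Real.sin s ^ (n - 1) := by
      rw [hftc]
      gcongr
      apply intervalIntegral.integral_mono_on h0 (hc3.intervalIntegrable _ _)
        (hc1.intervalIntegrable _ _)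
      intro s hs
      have h1 : 0 ≤ Real.sin s ^ (n - 1) := pow_nonneg (hsin_nonneg s hs) _
      nlinarith [Real.cos_le_one s]
    have h1 : Real.sin α = (Real.sin α ^ n) ^ ((1:ℝ)/n) := by
      rw [← Real.rpow_natCast (Real.sin α) n, ← Real.rpow_mul
        (Real.sin_nonneg_of_nonneg_of_le_pi h0 hπ), mul_one_div, div_self hn0, Real.rpow_one]
    rw [h1]
    exact Real.rpow_le_rpow (pow_nonneg (Real.sin_nonneg_of_nonneg_of_le_pi h0 hπ) _) hle
      (by positivity)
  · -- upper bound
    have hle : (n : ℝ) * (∫ s in (0:ℝ)..α, Real.sin s ^ (n - 1)) ≤ α ^ n := by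
      have hcomp : (∫ s in (0:ℝ)..α, Real.sin s ^ (n - 1)) ≤ ∫ s in (0:ℝ)..α, s ^ (n - 1) := by
        apply intervalIntegral.integral_mono_on h0 (hc1.intervalIntegrable _ _)
          (hc2.intervalIntegrable _ _)
        intro s hs
        exact pow_le_pow_left₀ (hsin_nonneg s hs) (Real.sin_le hs.1) _
      have hpow : (∫ s in (0:ℝ)..α, s ^ (n - 1)) = α ^ n / n := by
        rw [integral_pow]
        have : n - 1 + 1 = n := by omega
        rw [this, zero_pow (by omega), sub_zero,
          show ((n - 1 : ℕ) : ℝ) + 1 = (n : ℝ) by push_cast [Nat.cast_sub hn]; ring]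
      calc (n : ℝ) * (∫ s in (0:ℝ)..α, Real.sin s ^ (n - 1))
          ≤ (n : ℝ) * (α ^ n / n) := by rw [← hpow]; gcongr
        _ = α ^ n := by field_simp
    have h1 : α = (α ^ n) ^ ((1:ℝ)/n) := by
      rw [← Real.rpow_natCast α n, ← Real.rpow_mul h0, mul_one_div, div_self hn0, Real.rpow_one]
    calc Sn n α ≤ (α ^ n) ^ ((1:ℝ)/n) :=
          Real.rpow_le_rpow (mul_nonneg hnpos.le hI_nonneg) hle (by positivity)
      _ = α := h1.symm
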